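/- For all integers n ≥ 0, m ≥ 0 and k ≥ 0, the determinant of the n×n matrix over ℚ with entries binom(i+j+k+m, i-j+m) (equal to binom(i+j+k+m, 2j+k), which vanishes when j > i+m), 0 ≤ i, j ≤ n-1, equals the determinant of the m×m matrix with entries C_{n-i+j}^{(2i+k+1)}, 0 ≤ i, j ≤ m-1. -/

import Mathlib

/-- `genCatalanZ n k` is `C_n^{(k)} = (k/(2n+k))·binom(2n+k, n)` for `n ≥ 0`, and `0` for `n < 0`. -/
def genCatalanZ (n : ℤ) (k : ℕ) : ℚ :=
  if 0 ≤ n then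
    ((k : ℚ) / ((2 * n.toNat + k : ℕ) : ℚ)) * (Nat.choose (2 * n.toNat + k) n.toNat : ℚ)
  else 0

set_option maxHeartbeats 1000000
open Finset Nat Matrix

/-- generalized Catalan number as a rational, with natural-number index -/
def cQ (t K : ℕ) : ℚ := (K : ℚ) / ((2 * t + K : ℕ) : ℚ) * ((2 * t + K).choose t : ℚ)


lemma cQ_succ_zero (K : ℕ) : cQ 0 (K + 1) = 1 := by
  unfold cQ
  norm_num
  exact (by positivity : ((K:ℚ)+1) ≠ 0)

lemma step (d s K : ℕ) :
    ((d : ℚ) + 1) * ((d : ℚ) + K + 2) * ((2*d+s+K+2).choose s : ℚ) * cQ (d+1) (K+1)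
      = ((s : ℚ) + 1) * ((2*d+s+K+2 : ℕ) : ℚ) * ((2*d+s+K+1).choose (s+1) : ℚ) * cQ d (K+1) := by
  have h1 : s ≤ 2*d+s+K+2 := by omega
  have h2 : s+1 ≤ 2*d+s+K+1 := by omega
  have h3 : d+1 ≤ 2*(d+1)+(K+1) := by omega
  have h4 : d ≤ 2*d+(K+1) := by omega
  unfold cQ
  rw [Nat.cast_choose ℚ h1, Nat.cast_choose ℚ h2, Nat.cast_choose ℚ h3, Nat.cast_choose ℚ h4]
  have e1 : 2*d+s+K+2 - s = 2*d+K+2 := by omega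
  have e2 : 2*d+s+K+1 - (s+1) = 2*d+K := by omega
  have e3 : 2*(d+1)+(K+1) = 2*d+K+3 := by omega
  have e4 : 2*d+K+3 - (d+1) = d+K+2 := by omega
  have e5 : 2*d+(K+1) = 2*d+K+1 := by omega
  have e6 : 2*d+K+1 - d = d+K+1 := by omega
  rw [e1, e2, e3, e4, e5, e6]
  have f1 : Nat.factorial (2*d+s+K+2) = (2*d+s+K+2) * Nat.factorial (2*d+s+K+1) := Nat.factorial_succ _
  have f2 : Nat.factorial (2*d+K+3) = (2*d+K+3) * ((2*d+K+2) * ((2*d+K+1) * Nat.factorial (2*d+K))) := by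
    rw [show Nat.factorial (2*d+K+3) = (2*d+K+3)*Nat.factorial (2*d+K+2) from Nat.factorial_succ _,
        show Nat.factorial (2*d+K+2) = (2*d+K+2)*Nat.factorial (2*d+K+1) from Nat.factorial_succ _,
        show Nat.factorial (2*d+K+1) = (2*d+K+1)*Nat.factorial (2*d+K) from Nat.factorial_succ _]
  have f3 : Nat.factorial (2*d+K+2) = (2*d+K+2) * ((2*d+K+1) * Nat.factorial (2*d+K)) := by
    rw [show Nat.factorial (2*d+K+2) = (2*d+K+2)*Nat.factorial (2*d+K+1) from Nat.factorial_succ _,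
        show Nat.factorial (2*d+K+1) = (2*d+K+1)*Nat.factorial (2*d+K) from Nat.factorial_succ _]
  have f4 : Nat.factorial (2*d+K+1) = (2*d+K+1) * Nat.factorial (2*d+K) := Nat.factorial_succ _
  have f5 : Nat.factorial (d+1) = (d+1) * Nat.factorial d := Nat.factorial_succ _
  have f6 : Nat.factorial (d+K+2) = (d+K+2) * Nat.factorial (d+K+1) := Nat.factorial_succ _
  have f7 : Nat.factorial (s+1) = (s+1) * Nat.factorial s := Nat.factorial_succ _
  rw [f1, f2, f3, f4, f5, f6, f7]
  have n1 : ((Nat.factorial (2*d+s+K+1)) : ℚ) ≠ 0 := by exact_mod_cast (Nat.factorial_pos _).ne'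
  have n2 : ((Nat.factorial (2*d+K)) : ℚ) ≠ 0 := by exact_mod_cast (Nat.factorial_pos _).ne'
  have n3 : ((Nat.factorial d) : ℚ) ≠ 0 := by exact_mod_cast (Nat.factorial_pos _).ne'
  have n4 : ((Nat.factorial (d+K+1)) : ℚ) ≠ 0 := by exact_mod_cast (Nat.factorial_pos _).ne'
  have n5 : ((Nat.factorial s) : ℚ) ≠ 0 := by exact_mod_cast (Nat.factorial_pos _).ne'
  push_cast
  field_simp

lemma dagger (R K : ℕ) :
    ∑ d ∈ Finset.range (R+1), (-1 : ℚ)^d * ((R+d+K).choose (R-d) : ℚ) * cQ d (K+1)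
      = if R = 0 then 1 else 0 := by
  rcases Nat.eq_zero_or_pos R with h | h
  · subst h
    simp [cQ_succ_zero]
  · rw [if_neg (by omega)]
    set F : ℕ → ℚ := fun d => (-1 : ℚ)^d * ((R+d+K).choose (R-d) : ℚ) * cQ d (K+1) with hF
    set H : ℕ → ℚ := fun d => if d ≤ R then (-(d : ℚ)) * ((d : ℚ)+K+1) * F d else 0 with hH
    have key : ∀ d ∈ Finset.range (R+1), ((R : ℚ) * ((R : ℚ)+K+1)) * F d = H (d+1) - H d := by
      intro d hd
      rw [Finset.mem_range] at hd
      rcases Nat.lt_or_ge d R with hdR | hdR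
      · -- d < R
        obtain ⟨s, rfl⟩ : ∃ s, R = d + s + 1 := ⟨R - d - 1, by omega⟩
        rw [hH]
        beta_reduce
        rw [if_pos (by omega), if_pos (by omega)]
        rw [hF]
        have c1 : d + s + 1 + (d+1) + K = 2*d+s+K+2 := by omega
        have c2 : d + s + 1 - (d+1) = s := by omega
        have c3 : d + s + 1 + d + K = 2*d+s+K+1 := by omega
        have c4 : d + s + 1 - d = s + 1 := by omega
        simp only [c1, c2, c3, c4]
        have hstep := step d s K
        have hsgn : (-1 : ℚ)^(d+1) = -(-1 : ℚ)^d := by rw [pow_succ]; ring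
        rw [hsgn]
        push_cast at hstep ⊢
        linear_combination (-(-1 : ℚ)^d) * hstep
      · -- d = R
        have hdR' : d = R := by omega
        subst hdR'
        rw [hH]
        beta_reduce
        rw [if_neg (by omega), if_pos le_rfl]
        push_cast
        ring
    have tele : ∑ d ∈ Finset.range (R+1), ((R : ℚ) * ((R : ℚ)+K+1)) * F d = H (R+1) - H 0 := by
      rw [Finset.sum_congr rfl key, Finset.sum_range_sub]
    have hH0 : H 0 = 0 := by rw [hH]; simp
    have hHR : H (R+1) = 0 := by rw [hH]; beta_reduce; rw [if_neg (by omega)]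
    rw [hH0, hHR, sub_zero, ← Finset.mul_sum] at tele
    have hne : ((R : ℚ) * ((R : ℚ)+K+1)) ≠ 0 := by positivity
    exact (mul_eq_zero.mp tele).resolve_left hne


/-- lower unitriangular binomial kernel -/
def tQ (k r c : ℕ) : ℚ := if c ≤ r then ((r+c+k).choose (r-c) : ℚ) else 0

/-- its inverse kernel: signed generalized Catalan numbers -/
def uQ (k c j : ℕ) : ℚ := if j ≤ c then (-1 : ℚ)^(c-j) * cQ (c-j) (2*j+k+1) else 0

lemma star (k N r j : ℕ) (hr : r < N) :
    ∑ c ∈ Finset.range N, tQ k r c * uQ k c j = if r = j then 1 else 0 := by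
  rcases Nat.lt_or_ge r j with hrj | hrj
  · rw [if_neg (by omega)]
    apply Finset.sum_eq_zero
    intro c _
    rcases Nat.lt_or_ge r c with h1 | h1
    · rw [tQ, if_neg (by omega), zero_mul]
    · rw [uQ, if_neg (by omega), mul_zero]
  · -- j ≤ r
    have h1 : ∑ c ∈ Finset.range N, tQ k r c * uQ k c j
        = ∑ c ∈ Finset.range (r+1), tQ k r c * uQ k c j := by
      refine (Finset.sum_subset (by intro x hx; simp at hx ⊢; omega) ?_).symm
      intro c _ hc
      simp only [Finset.mem_range] at hc
      rw [tQ, if_neg (by omega), zero_mul]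
    rw [h1]
    have h2 : r + 1 = j + (r - j + 1) := by omega
    rw [h2, Finset.sum_range_add]
    have h3 : ∑ c ∈ Finset.range j, tQ k r c * uQ k c j = 0 := by
      apply Finset.sum_eq_zero
      intro c hc
      simp only [Finset.mem_range] at hc
      rw [uQ, if_neg (by omega), mul_zero]
    rw [h3, zero_add]
    have h4 : ∀ d ∈ Finset.range (r - j + 1), tQ k r (j+d) * uQ k (j+d) j
        = (-1 : ℚ)^d * (((r-j)+d+(2*j+k)).choose ((r-j)-d) : ℚ) * cQ d ((2*j+k)+1) := by
      intro d hd
      simp only [Finset.mem_range] at hd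
      rw [tQ, if_pos (by omega), uQ, if_pos (by omega)]
      have e1 : r + (j+d) + k = (r-j)+d+(2*j+k) := by omega
      have e2 : r - (j+d) = (r-j)-d := by omega
      have e3 : j + d - j = d := by omega
      rw [e1, e2, e3]
      ring
    rw [Finset.sum_congr rfl h4, dagger (r-j) (2*j+k)]
    by_cases h : r = j
    · rw [if_pos (by omega), if_pos h]
    · rw [if_neg (by omega), if_neg h]

lemma genCat_nat (t K : ℕ) : genCatalanZ (t : ℤ) K = cQ t K := by
  simp [genCatalanZ, cQ]

lemma sgn_sub (a b : ℕ) (h : b ≤ a) : ((-1 : ℚ))^(a-b) = (-1 : ℚ)^(a+b) := by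
  have e : a + b = (a - b) + 2*b := by omega
  rw [e, pow_add, pow_mul]
  norm_num

lemma rotpow_val (N M : ℕ) (v : Fin (N+1)) :
    (((finRotate (N+1))^M) v : ℕ) = ((v : ℕ) + M) % (N+1) := by
  induction M generalizing v with
  | zero => simp [Nat.mod_eq_of_lt v.isLt]
  | succ M ih =>
    rw [pow_succ, Equiv.Perm.mul_apply, ih (finRotate _ v), finRotate_succ_apply,
      Fin.val_add, Fin.val_one']
    rw [Nat.mod_add_mod, Nat.add_right_comm, Nat.add_mod_mod, Nat.add_assoc]

lemma rotpow_val' (N M : ℕ) (v : Fin N) :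
    (((finRotate N)^M) v : ℕ) = ((v : ℕ) + M) % N := by
  match N with
  | 0 => exact v.elim0
  | N+1 => exact rotpow_val N M v

lemma sign_rot_q (N M : ℕ) :
    ((Equiv.Perm.sign ((finRotate N)^M) : ℤ) : ℚ) = (-1)^((N-1)*M) := by
  match N with
  | 0 =>
    have h : (finRotate 0)^M = 1 := Subsingleton.elim _ _
    rw [h]
    simp
  | N+1 =>
    rw [map_pow, sign_finRotate]
    push_cast
    rw [← pow_mul]

theorem stmt_13 (n m k : ℕ) :
    Matrix.det (Matrix.of fun i j : Fin n =>
        (Nat.choose ((i : ℕ) + (j : ℕ) + k + m) (2 * (j : ℕ) + k) : ℚ))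
      = Matrix.det (Matrix.of fun i j : Fin m =>
          genCatalanZ ((n : ℤ) - (i : ℕ) + (j : ℕ)) (2 * (i : ℕ) + k + 1)) := by
  classical
  -- named matrices
  set A : Matrix (Fin n) (Fin n) ℚ := Matrix.of fun i j => tQ k (m+(i:ℕ)) (j:ℕ) with hA
  set P : Matrix (Fin m) (Fin n) ℚ := Matrix.of fun i j => tQ k (i:ℕ) (j:ℕ) with hP
  set X : Matrix (Fin n) (Fin m) ℚ := Matrix.of fun c j => uQ k (c:ℕ) (j:ℕ) with hX
  set Z : Matrix (Fin m) (Fin m) ℚ := Matrix.of fun c j => uQ k (n+(c:ℕ)) (j:ℕ) with hZ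
  set R : Matrix (Fin n) (Fin m) ℚ :=
    Matrix.of fun i j => tQ k (m+(i:ℕ)) (n+(j:ℕ)) with hR
  set Q : Matrix (Fin m) (Fin m) ℚ := Matrix.of fun i j => tQ k (i:ℕ) (n+(j:ℕ)) with hQ
  set T' : Matrix (Fin n ⊕ Fin m) (Fin n ⊕ Fin m) ℚ := Matrix.fromBlocks A R P Q with hT'
  set M₂ : Matrix (Fin n ⊕ Fin m) (Fin n ⊕ Fin m) ℚ := Matrix.fromBlocks 1 X 0 Z with hM₂
  -- row function values
  have hrowlt : ∀ a : Fin n ⊕ Fin m, (Sum.elim (fun i : Fin n => m+(i:ℕ)) (fun i : Fin m => (i:ℕ)) a) < n + m := by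
    rintro (i | i) <;> simp <;> omega
  -- Step 1 : T' * M₂ = fromBlocks A 0 P 1
  have key : ∀ (a : Fin n ⊕ Fin m) (j : Fin m),
      (T' * M₂) a (Sum.inr j)
        = if (Sum.elim (fun i : Fin n => m+(i:ℕ)) (fun i : Fin m => (i:ℕ)) a) = (j:ℕ) then 1 else 0 := by
    intro a j
    rw [Matrix.mul_apply, Fintype.sum_sum_type]
    set r : ℕ := Sum.elim (fun i : Fin n => m+(i:ℕ)) (fun i : Fin m => (i:ℕ)) a with hr
    have e1 : ∀ c : Fin n, T' a (Sum.inl c) * M₂ (Sum.inl c) (Sum.inr j)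
        = tQ k r (c:ℕ) * uQ k (c:ℕ) (j:ℕ) := by
      intro c
      rcases a with i | i <;> simp [hT', hM₂, hA, hP, hX, Matrix.fromBlocks, hr]
    have e2 : ∀ c : Fin m, T' a (Sum.inr c) * M₂ (Sum.inr c) (Sum.inr j)
        = tQ k r (n+(c:ℕ)) * uQ k (n+(c:ℕ)) (j:ℕ) := by
      intro c
      rcases a with i | i <;> simp [hT', hM₂, hR, hQ, hZ, Matrix.fromBlocks, hr]
    rw [Finset.sum_congr rfl (fun c _ => e1 c), Finset.sum_congr rfl (fun c _ => e2 c)]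
    rw [Fin.sum_univ_eq_sum_range (fun v => tQ k r v * uQ k v (j:ℕ)) n,
        Fin.sum_univ_eq_sum_range (fun v => tQ k r (n+v) * uQ k (n+v) (j:ℕ)) m]
    rw [← Finset.sum_range_add (fun v => tQ k r v * uQ k v (j:ℕ)) n m]
    exact star k (n+m) r j (by rw [hr]; exact hrowlt a)
  have hprod : T' * M₂ = Matrix.fromBlocks A 0 P 1 := by
    ext a b
    rcases b with jb | jb
    · rcases a with ia | ia
      · simp [hT', hM₂, Matrix.mul_apply, Fintype.sum_sum_type, Matrix.fromBlocks,
          Matrix.one_apply, mul_ite, mul_one, mul_zero]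
      · simp [hT', hM₂, Matrix.mul_apply, Fintype.sum_sum_type, Matrix.fromBlocks,
          Matrix.one_apply, mul_ite, mul_one, mul_zero]
    · rw [key a jb]
      rcases a with ia | ia
      · rw [if_neg (by simp; omega)]
        simp [Matrix.fromBlocks]
      · simp [Matrix.fromBlocks, Matrix.one_apply, Fin.val_eq_val]
  -- the full triangular matrix
  set T : Matrix (Fin (n+m)) (Fin (n+m)) ℚ := Matrix.of fun a b => tQ k (a:ℕ) (b:ℕ) with hT
  have hdetT : T.det = 1 := by
    have htri : T.BlockTriangular OrderDual.toDual := by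
      intro i j hij
      have hlt : (i:ℕ) < (j:ℕ) := hij
      simp only [hT, Matrix.of_apply, tQ]
      rw [if_neg (by omega)]
    rw [Matrix.det_of_lowerTriangular T htri]
    apply Finset.prod_eq_one
    intro i _
    simp [hT, tQ]
  set σ : Equiv.Perm (Fin (n+m)) := (finRotate (n+m))^m with hσ
  have hTT' : T' = (T.submatrix σ id).submatrix finSumFinEquiv finSumFinEquiv := by
    ext a b
    have hcol : ∀ b : Fin n ⊕ Fin m, ((finSumFinEquiv b : Fin (n+m)) : ℕ)
        = Sum.elim (fun j : Fin n => (j:ℕ)) (fun j : Fin m => n+(j:ℕ)) b := by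
      rintro (j | j) <;> simp
    have hrow : ∀ a : Fin n ⊕ Fin m, ((σ (finSumFinEquiv a) : Fin (n+m)) : ℕ)
        = Sum.elim (fun i : Fin n => m+(i:ℕ)) (fun i : Fin m => (i:ℕ)) a := by
      rintro (i | i)
      · rw [hσ, rotpow_val']
        rw [hcol (Sum.inl i)]
        simp only [Sum.elim_inl]
        rw [Nat.mod_eq_of_lt (by omega)]
        omega
      · rw [hσ, rotpow_val']
        rw [hcol (Sum.inr i)]
        simp only [Sum.elim_inr]
        have e : n + (i:ℕ) + m = (i:ℕ) + (n+m) := by omega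
        rw [e, Nat.add_mod_right, Nat.mod_eq_of_lt (by omega)]
    have expand : ∀ a b : Fin n ⊕ Fin m,
        ((T.submatrix σ id).submatrix finSumFinEquiv finSumFinEquiv) a b
          = tQ k (Sum.elim (fun i : Fin n => m+(i:ℕ)) (fun i : Fin m => (i:ℕ)) a)
                 (Sum.elim (fun j : Fin n => (j:ℕ)) (fun j : Fin m => n+(j:ℕ)) b) := by
      intro a b
      simp only [Matrix.submatrix_apply, id_eq, hT, Matrix.of_apply]
      rw [hrow a, hcol b]
    rw [expand a b]
    rcases a with i | i <;> rcases b with j | j <;>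
      simp [hT', hA, hR, hP, hQ, Matrix.fromBlocks]
  have hdetT' : T'.det = (-1:ℚ)^(n*m) := by
    rw [hTT', Matrix.det_submatrix_equiv_self, Matrix.det_permute, hdetT, mul_one, hσ]
    rw [sign_rot_q]
    cases m with
    | zero => simp
    | succ m' =>
      have e : (n+(m'+1)-1)*(m'+1) = n*(m'+1) + m'*(m'+1) := by
        have e2 : n+(m'+1)-1 = n+m' := by omega
        rw [e2, add_mul]
      rw [e, pow_add, (Nat.even_mul_succ_self m').neg_one_pow, mul_one]
  have hdetM₂ : M₂.det = Z.det := by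
    rw [hM₂, Matrix.det_fromBlocks_zero₂₁, Matrix.det_one, one_mul]
  have hdetA : A.det = (-1:ℚ)^(n*m) * Z.det := by
    have h1 : (T' * M₂).det = A.det := by
      rw [hprod, Matrix.det_fromBlocks_zero₁₂, Matrix.det_one, mul_one]
    rw [← h1, Matrix.det_mul, hdetT', hdetM₂]
  -- identify A with the statement's left matrix
  have hAeq : (Matrix.of fun i j : Fin n =>
      (Nat.choose ((i : ℕ) + (j : ℕ) + k + m) (2 * (j : ℕ) + k) : ℚ)) = A := by
    ext i j
    simp only [hA, Matrix.of_apply, tQ]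
    by_cases h : (j:ℕ) ≤ m + (i:ℕ)
    · rw [if_pos h]
      have e1 : m + (i:ℕ) + (j:ℕ) + k = (i:ℕ) + (j:ℕ) + k + m := by omega
      have e2 : m + (i:ℕ) - (j:ℕ) = ((i:ℕ) + (j:ℕ) + k + m) - (2*(j:ℕ)+k) := by omega
      rw [e1, e2, Nat.choose_symm (by omega)]
    · rw [if_neg h, Nat.choose_eq_zero_of_lt (by omega)]
      simp
  -- identify Z with the statement's right matrix, up to signs
  set W : Matrix (Fin m) (Fin m) ℚ := Matrix.of fun i j =>
      genCatalanZ ((n : ℤ) - (i : ℕ) + (j : ℕ)) (2 * (i : ℕ) + k + 1) with hW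
  set B : Matrix (Fin m) (Fin m) ℚ := Matrix.of fun c j : Fin m =>
      (-1:ℚ)^((j:ℕ)) * W.transpose c j with hB
  have hZW : Z = Matrix.of fun c j : Fin m =>
      (-1:ℚ)^(n+(c:ℕ)) * B c j := by
    ext c j
    simp only [hZ, hB, hW, Matrix.of_apply, Matrix.transpose_apply, uQ]
    by_cases h : (j:ℕ) ≤ n + (c:ℕ)
    · rw [if_pos h]
      have e : (n:ℤ) - (j:ℕ) + (c:ℕ) = ((n + (c:ℕ) - (j:ℕ) : ℕ) : ℤ) := by omega
      rw [e, genCat_nat, sgn_sub _ _ h, pow_add]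
      ring
    · rw [if_neg h]
      have hneg : ¬ (0 ≤ (n:ℤ) - (j:ℕ) + (c:ℕ)) := by omega
      simp only [genCatalanZ]
      rw [if_neg hneg]
      ring
  have hZdet : Z.det = (-1:ℚ)^(n*m) * W.det := by
    rw [hZW, Matrix.det_mul_column (fun c : Fin m => (-1:ℚ)^(n+(c:ℕ))) B, hB,
      Matrix.det_mul_row (fun j : Fin m => (-1:ℚ)^((j:ℕ))) W.transpose,
      Matrix.det_transpose]
    rw [← mul_assoc, ← Finset.prod_mul_distrib]
    congr 1
    have hc : ∀ c : Fin m, (-1:ℚ)^(n+(c:ℕ)) * (-1:ℚ)^((c:ℕ)) = (-1:ℚ)^n := by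
      intro c
      rw [← pow_add]
      have e : n + (c:ℕ) + (c:ℕ) = n + 2*(c:ℕ) := by omega
      rw [e, pow_add, pow_mul]
      norm_num
    rw [Finset.prod_congr rfl (fun c _ => hc c), Finset.prod_const, Finset.card_univ,
      Fintype.card_fin, ← pow_mul]
  rw [hAeq, hdetA, hZdet, ← mul_assoc]
  have hsq : ((-1:ℚ))^(n*m) * ((-1:ℚ))^(n*m) = 1 := by
    rw [← pow_add]
    have e : n*m + n*m = 2*(n*m) := by omega
    rw [e, pow_mul]
    norm_num
  rw [hsq, one_mul]
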